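/- Let 0 < α < 2 and ū : [1,∞) → [0,∞) measurable. If there exist C > 0, β ≥ α and N ≥ 1 such that ∫_R^{2R} R^α ū(r)/(r (r²-R²)^{α/2}) dr ≥ C R^{β} for all R > N, and ∫₁^∞ ū(r)/r^{1+α} dr < ∞, then we obtain a contradiction; i.e. there is no nonnegative measurable ū with ∫₁^∞ ū(r)/r^{1+α} dr < ∞ satisfying such a lower bound with β ≥ α. -/

import Mathlib

open MeasureTheory Set ENNReal

private lemma rpow_Ioo_lintegral {s b : ℝ} (hs1 : s < 1) (hb : 0 < b) :
    ∫⁻ x in Ioo (0:ℝ) b, ENNReal.ofReal (x ^ (-s)) = ENNReal.ofReal (b ^ (1-s) / (1-s)) := by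
  have hint : IntegrableOn (fun x : ℝ => x ^ (-s)) (Ioo 0 b) :=
    (intervalIntegral.integrableOn_Ioo_rpow_iff hb).2 (by linarith)
  rw [← ofReal_integral_eq_lintegral_ofReal hint ?nn]
  case nn =>
    filter_upwards [ae_restrict_mem measurableSet_Ioo] with x hx
    exact Real.rpow_nonneg (le_of_lt hx.1) _
  congr 1
  rw [← MeasureTheory.integral_Ioc_eq_integral_Ioo, ← intervalIntegral.integral_of_le hb.le,
    integral_rpow (Or.inl (by linarith)),
    Real.zero_rpow (by intro hh; linarith : -s + 1 ≠ 0), neg_add_eq_sub, sub_zero]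

private lemma cov_lemma (r s : ℝ) :
    ∫⁻ R in Ioo (r/2) r, ENNReal.ofReal ((r - R) ^ (-s)) =
      ∫⁻ x in Ioo (0:ℝ) (r/2), ENNReal.ofReal (x ^ (-s)) := by
  have hmp : MeasurePreserving (fun t : ℝ => r - t) volume volume :=
    Measure.measurePreserving_sub_left volume r
  have hemb : MeasurableEmbedding (fun t : ℝ => r - t) :=
    (Homeomorph.subLeft r).measurableEmbedding
  have key := hmp.setLIntegral_comp_preimage_emb hemb
      (fun x => ENNReal.ofReal (x ^ (-s))) (Ioo (0:ℝ) (r/2))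
  have hset : (fun t : ℝ => r - t) ⁻¹' Ioo (0:ℝ) (r/2) = Ioo (r/2) r := by
    ext t
    simp only [mem_preimage, mem_Ioo]
    constructor <;> rintro ⟨h1, h2⟩ <;> constructor <;> linarith
  rw [hset] at key
  exact key

private lemma div_lemma {N C : ℝ} (hN : 0 < N) (hC : 0 < C) :
    ∫⁻ R in Ioi N, ENNReal.ofReal (C * R ^ (-(1:ℝ))) = ⊤ := by
  by_contra h
  have hlt : ∫⁻ R in Ioi N, ENNReal.ofReal (C * R ^ (-(1:ℝ))) < ⊤ := lt_top_iff_ne_top.2 h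
  have hmeasf : Measurable fun R : ℝ => C * R ^ (-(1:ℝ)) := by fun_prop
  have hnn : 0 ≤ᵐ[volume.restrict (Ioi N)] fun R : ℝ => C * R ^ (-(1:ℝ)) := by
    filter_upwards [ae_restrict_mem measurableSet_Ioi] with x hx
    have hx0 : (0:ℝ) < x := hN.trans hx
    positivity
  have hint : IntegrableOn (fun R : ℝ => C * R ^ (-(1:ℝ))) (Ioi N) :=
    ⟨hmeasf.aestronglyMeasurable, (hasFiniteIntegral_iff_ofReal hnn).2 hlt⟩
  have h2 : IntegrableOn (fun R : ℝ => R ^ (-(1:ℝ))) (Ioi N) := by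
    have h3 := hint.const_mul C⁻¹
    simp [inv_mul_cancel_left₀ hC.ne'] at h3
    exact h3
  rw [integrableOn_Ioi_rpow_iff hN] at h2
  exact lt_irrefl _ h2

private lemma pointwise_bound {α : ℝ} (hα0 : 0 < α) {R r ur : ℝ} (hur : 0 ≤ ur)
    (hR0 : 0 < R) (hRr : R < r) (hr2R : r < 2*R) :
    R ^ (-1-α) * (R ^ α * ur / (r * (r ^ 2 - R ^ 2) ^ (α / 2))) ≤
      2 * ur * r ^ (-2-α/2) * (r - R) ^ (-(α/2)) := by
  have hr0 : (0:ℝ) < r := hR0.trans hRr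
  have hrR : (0:ℝ) < r - R := by linarith
  have hA : (0:ℝ) < r ^ 2 - R ^ 2 := by nlinarith
  have hApow : (0:ℝ) < (r ^ 2 - R ^ 2) ^ (α/2) := Real.rpow_pos_of_pos hA _
  have hP : (0:ℝ) < r ^ (α/2) := Real.rpow_pos_of_pos hr0 _
  have hQ : (0:ℝ) < (r - R) ^ (α/2) := Real.rpow_pos_of_pos hrR _
  have e1 : R ^ (-1-α) * (R ^ α * ur / (r * (r ^ 2 - R ^ 2) ^ (α / 2)))
      = ur / (R * (r * (r ^ 2 - R ^ 2) ^ (α / 2))) := by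
    rw [show R ^ (-1-α) * (R ^ α * ur / (r * (r ^ 2 - R ^ 2) ^ (α / 2)))
        = (R ^ (-1-α) * R ^ α) * ur / (r * (r ^ 2 - R ^ 2) ^ (α / 2)) by ring,
      ← Real.rpow_add hR0, show -1-α+α = -(1:ℝ) by ring, Real.rpow_neg_one,
      inv_mul_eq_div, div_div]
  have e2 : r ^ (α/2) * (r-R) ^ (α/2) ≤ (r ^ 2 - R ^ 2) ^ (α/2) := by
    rw [← Real.mul_rpow hr0.le hrR.le]
    exact Real.rpow_le_rpow (by positivity) (by nlinarith) (by positivity)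
  have denom : (r/2) * (r * (r ^ (α/2) * (r-R) ^ (α/2)))
      ≤ R * (r * (r ^ 2 - R ^ 2) ^ (α / 2)) := by
    apply mul_le_mul (by linarith : r/2 ≤ R)
      (mul_le_mul_of_nonneg_left e2 hr0.le) (by positivity) hR0.le
  have step : ur / (R * (r * (r ^ 2 - R ^ 2) ^ (α / 2)))
      ≤ ur / ((r/2) * (r * (r ^ (α/2) * (r-R) ^ (α/2)))) := by
    gcongr
  have e3 : ur / ((r/2) * (r * (r ^ (α/2) * (r-R) ^ (α/2))))
      = 2 * ur * r ^ (-2-α/2) * (r - R) ^ (-(α/2)) := by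
    have hPd : r ^ (-2-α/2) = (r ^ (2:ℕ) * r ^ (α/2))⁻¹ := by
      rw [show (-2-α/2 : ℝ) = -(2 + α/2) by ring, Real.rpow_neg hr0.le, Real.rpow_add hr0,
        show (2:ℝ) = ((2:ℕ):ℝ) by norm_num, Real.rpow_natCast]
    have hQd : (r-R) ^ (-(α/2)) = ((r-R) ^ (α/2))⁻¹ := by rw [Real.rpow_neg hrR.le]
    rw [hPd, hQd]
    field_simp
  rw [e1, ← e3]
  exact step

/-- No nonnegative measurable `u` on `[1,∞)` with `∫₁^∞ u(r)/r^{1+α} dr < ∞` can satisfy the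
lower bound `∫_R^{2R} R^α u(r)/(r (r²-R²)^{α/2}) dr ≥ C R^β` for all `R > N`, where `β ≥ α`. -/
theorem stmt_5 (α β : ℝ) (hα0 : 0 < α) (hα2 : α < 2) (hβ : α ≤ β)
    (u : ℝ → ℝ) (hmeas : Measurable u) (hnonneg : ∀ r, 1 ≤ r → 0 ≤ u r)
    (C N : ℝ) (hC : 0 < C) (hN : 1 ≤ N)
    (hlow : ∀ R : ℝ, N < R →
      ENNReal.ofReal (C * R ^ β) ≤
        ∫⁻ r in Ioo R (2 * R),
          ENNReal.ofReal (R ^ α * u r / (r * (r ^ 2 - R ^ 2) ^ (α / 2))))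
    (hfin : (∫⁻ r in Ioi (1:ℝ), ENNReal.ofReal (u r / r ^ (1 + α))) < ⊤) :
    False := by
  classical
  have hαh : (0:ℝ) < 1 - α/2 := by linarith
  set c : ℝ := 2 * (1/2:ℝ) ^ (1-α/2) / (1-α/2) with hc_def
  have hc : 0 < c := by
    have : (0:ℝ) < (1/2:ℝ) ^ (1-α/2) := Real.rpow_pos_of_pos (by norm_num) _
    positivity
  set T : Set (ℝ × ℝ) := {p : ℝ × ℝ | N < p.1 ∧ p.1 < p.2 ∧ p.2 < 2 * p.1} with hT_def
  have hTmeas : MeasurableSet T := by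
    have : T = {p : ℝ × ℝ | N < p.1} ∩ ({p : ℝ × ℝ | p.1 < p.2} ∩ {p : ℝ × ℝ | p.2 < 2 * p.1}) := rfl
    rw [this]
    exact (measurableSet_lt measurable_const measurable_fst).inter
      ((measurableSet_lt measurable_fst measurable_snd).inter
        (measurableSet_lt measurable_snd (measurable_fst.const_mul 2)))
  set g : ℝ × ℝ → ℝ≥0∞ := fun p =>
    T.indicator (fun p => ENNReal.ofReal
      (p.1 ^ (-1-α) * (p.1 ^ α * u p.2 / (p.2 * (p.2 ^ 2 - p.1 ^ 2) ^ (α / 2))))) p with hg_def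
  have hg : Measurable g := by
    apply Measurable.indicator _ hTmeas
    fun_prop
  -- Tonelli swap
  have swap : ∫⁻ R : ℝ, ∫⁻ r : ℝ, g (R, r) = ∫⁻ r : ℝ, ∫⁻ R : ℝ, g (R, r) :=
    lintegral_lintegral_swap hg.aemeasurable
  -- Lower bound for the inner integral in the (R, r) order
  have hlow2 : ∀ R : ℝ, N < R → ENNReal.ofReal (C * R ^ (-(1:ℝ))) ≤ ∫⁻ r : ℝ, g (R, r) := by
    intro R hR
    have hR0 : (0:ℝ) < R := lt_of_lt_of_le zero_lt_one (hN.trans hR.le)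
    have hR1 : (1:ℝ) ≤ R := hN.trans hR.le
    have hgR : (fun r => g (R, r)) = (Ioo R (2*R)).indicator
        (fun r => ENNReal.ofReal (R ^ (-1-α) * (R ^ α * u r / (r * (r ^ 2 - R ^ 2) ^ (α / 2))))) := by
      funext r
      by_cases hr : r ∈ Ioo R (2*R)
      · rw [indicator_of_mem hr]
        have hmem : (R, r) ∈ T := ⟨hR, hr.1, hr.2⟩
        simp only [hg_def, indicator_of_mem hmem]
      · rw [indicator_of_notMem hr]
        have hnmem : (R, r) ∉ T := by
          intro hmem
          exact hr ⟨hmem.2.1, hmem.2.2⟩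
        simp only [hg_def, indicator_of_notMem hnmem]
    rw [hgR, lintegral_indicator measurableSet_Ioo]
    have hpull : ∀ r : ℝ,
        ENNReal.ofReal (R ^ (-1-α) * (R ^ α * u r / (r * (r ^ 2 - R ^ 2) ^ (α / 2)))) =
        ENNReal.ofReal (R ^ (-1-α)) *
          ENNReal.ofReal (R ^ α * u r / (r * (r ^ 2 - R ^ 2) ^ (α / 2))) :=
      fun r => ENNReal.ofReal_mul (Real.rpow_nonneg hR0.le _)
    simp_rw [hpull]
    rw [lintegral_const_mul' _ _ ENNReal.ofReal_ne_top]
    calc ENNReal.ofReal (C * R ^ (-(1:ℝ)))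
        ≤ ENNReal.ofReal (R ^ (-1-α)) * ENNReal.ofReal (C * R ^ β) := by
          rw [← ENNReal.ofReal_mul (Real.rpow_nonneg hR0.le _)]
          apply ENNReal.ofReal_le_ofReal
          have key : R ^ (-1-α) * (C * R ^ β) = C * R ^ (-1-α+β) := by
            rw [Real.rpow_add hR0]; ring
          rw [key]
          have hexp : R ^ (-(1:ℝ)) ≤ R ^ (-1-α+β) :=
            Real.rpow_le_rpow_of_exponent_le hR1 (by linarith)
          exact mul_le_mul_of_nonneg_left hexp hC.le
      _ ≤ _ := mul_le_mul_right (hlow R hR) _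
  -- divergence of the iterated integral in the (R, r) order
  have lower : (∫⁻ R : ℝ, ∫⁻ r : ℝ, g (R, r)) = ⊤ := by
    rw [eq_top_iff, ← div_lemma (lt_of_lt_of_le zero_lt_one hN) hC]
    calc ∫⁻ R in Ioi N, ENNReal.ofReal (C * R ^ (-(1:ℝ)))
        ≤ ∫⁻ R in Ioi N, ∫⁻ r : ℝ, g (R, r) :=
          setLIntegral_mono' measurableSet_Ioi hlow2
      _ ≤ ∫⁻ R : ℝ, ∫⁻ r : ℝ, g (R, r) := setLIntegral_le_lintegral _ _
  -- Upper bound for the inner integral in the (r, R) order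
  have upper_r : ∀ r : ℝ, (∫⁻ R : ℝ, g (R, r)) ≤
      (Ioi N).indicator (fun r => ENNReal.ofReal (c * (u r / r ^ (1+α)))) r := by
    intro r
    by_cases hr : N < r
    · rw [indicator_of_mem (show r ∈ Ioi N from hr)]
      have hr1 : (1:ℝ) ≤ r := hN.trans hr.le
      have hr0 : (0:ℝ) < r := lt_of_lt_of_le zero_lt_one hr1
      have hur : 0 ≤ u r := hnonneg r hr1
      have hnn2 : (0:ℝ) ≤ 2 * u r * r ^ (-2-α/2) :=
        mul_nonneg (mul_nonneg (by norm_num) hur) (Real.rpow_nonneg hr0.le _)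
      have hpt : ∀ R : ℝ, g (R, r) ≤ (Ioo (r/2) r).indicator
          (fun R => ENNReal.ofReal (2 * u r * r ^ (-2-α/2) * (r - R) ^ (-(α/2)))) R := by
        intro R
        by_cases hRT : (R, r) ∈ T
        · have hNR : N < R := hRT.1
          have hRr : R < r := hRT.2.1
          have hr2R : r < 2*R := hRT.2.2
          have hRmem : R ∈ Ioo (r/2) r := ⟨by linarith, hRr⟩
          rw [indicator_of_mem hRmem]
          have hgval : g (R, r) = ENNReal.ofReal
              (R ^ (-1-α) * (R ^ α * u r / (r * (r ^ 2 - R ^ 2) ^ (α / 2)))) := by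
            simp only [hg_def, indicator_of_mem hRT]
          rw [hgval]
          exact ENNReal.ofReal_le_ofReal
            (pointwise_bound hα0 hur (lt_of_lt_of_le zero_lt_one (hN.trans hNR.le)) hRr hr2R)
        · simp only [hg_def, indicator_of_notMem hRT]
          exact zero_le
      calc (∫⁻ R : ℝ, g (R, r))
          ≤ ∫⁻ R : ℝ, (Ioo (r/2) r).indicator
              (fun R => ENNReal.ofReal (2 * u r * r ^ (-2-α/2) * (r - R) ^ (-(α/2)))) R :=
            lintegral_mono hpt
        _ = ∫⁻ R in Ioo (r/2) r,
              ENNReal.ofReal (2 * u r * r ^ (-2-α/2) * (r - R) ^ (-(α/2))) :=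
            lintegral_indicator measurableSet_Ioo _
        _ = ENNReal.ofReal (2 * u r * r ^ (-2-α/2)) *
              ∫⁻ R in Ioo (r/2) r, ENNReal.ofReal ((r - R) ^ (-(α/2))) := by
            simp_rw [fun R : ℝ => ENNReal.ofReal_mul (q := (r-R) ^ (-(α/2))) hnn2]
            rw [lintegral_const_mul' _ _ ENNReal.ofReal_ne_top]
        _ = ENNReal.ofReal (2 * u r * r ^ (-2-α/2)) *
              ENNReal.ofReal ((r/2) ^ (1-α/2) / (1-α/2)) := by
            rw [cov_lemma, rpow_Ioo_lintegral (by linarith) (by linarith)]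
        _ = ENNReal.ofReal (c * (u r / r ^ (1+α))) := by
            rw [← ENNReal.ofReal_mul hnn2]
            congr 1
            have h1 : ((r:ℝ)/2) ^ (1-α/2) = r ^ (1-α/2) * (1/2:ℝ) ^ (1-α/2) := by
              rw [show (r/2 : ℝ) = r * (1/2) by ring, Real.mul_rpow hr0.le (by norm_num)]
            have h2 : r ^ (-2-α/2) * r ^ (1-α/2) = r ^ (-(1+α)) := by
              rw [← Real.rpow_add hr0]
              congr 1
              ring
            have h3 : u r / r ^ (1+α) = u r * r ^ (-(1+α)) := by
              rw [Real.rpow_neg hr0.le, div_eq_mul_inv]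
            rw [h1, h3, ← h2, hc_def]
            ring
    · have hz : ∀ R : ℝ, g (R, r) = 0 := by
        intro R
        have : (R, r) ∉ T := by
          rintro ⟨h1, h2, h3⟩
          exact hr (h1.trans h2)
        simp only [hg_def, indicator_of_notMem this]
      simp only [hz, lintegral_zero]
      exact zero_le
  -- finiteness of the iterated integral in the (r, R) order
  have upper : (∫⁻ r : ℝ, ∫⁻ R : ℝ, g (R, r)) < ⊤ := by
    calc (∫⁻ r : ℝ, ∫⁻ R : ℝ, g (R, r))
        ≤ ∫⁻ r : ℝ, (Ioi N).indicator (fun r => ENNReal.ofReal (c * (u r / r ^ (1+α)))) r :=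
          lintegral_mono upper_r
      _ = ∫⁻ r in Ioi N, ENNReal.ofReal (c * (u r / r ^ (1+α))) :=
          lintegral_indicator measurableSet_Ioi _
      _ ≤ ∫⁻ r in Ioi 1, ENNReal.ofReal (c * (u r / r ^ (1+α))) :=
          lintegral_mono_set (Ioi_subset_Ioi hN)
      _ = ENNReal.ofReal c * ∫⁻ r in Ioi 1, ENNReal.ofReal (u r / r ^ (1+α)) := by
          simp_rw [ENNReal.ofReal_mul hc.le]
          rw [lintegral_const_mul' _ _ ENNReal.ofReal_ne_top]
      _ < ⊤ := ENNReal.mul_lt_top ENNReal.ofReal_lt_top hfin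
  rw [swap] at lower
  exact upper.ne lower
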